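/- Let J = S \ {s_{i-2}, s_{i-1}, s_i} and u, v ∈ (S_n)^J with u ≤ v, u^{-1}(i−1) ≥ v^{-1}(i−1) and u^{-1}(i) < v^{-1}(i). Suppose s_j is a right descent of v with v(j) = i−1, v(j+1) < i−1, and s_j is not a right descent of u with u(j) < i−1 and u(j+1) = i. Then u s_j ≤ v s_j in the Bruhat order. -/

import Mathlib

open Finset Polynomial

/-- The inversion number (Coxeter length) of a permutation of `ℕ`, counted on `{1, …, n}`. -/
def invNum (n : ℕ) (u : Equiv.Perm ℕ) : ℕ :=
  (((Finset.Icc 1 n) ×ˢ (Finset.Icc 1 n)).filter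
    (fun p => p.1 < p.2 ∧ u p.2 < u p.1)).card

/-- `u` is a member of `S_n`: it fixes every point outside `{1, …, n}`. -/
def IsPermOn (n : ℕ) (u : Equiv.Perm ℕ) : Prop :=
  ∀ m, m ∉ Finset.Icc 1 n → u m = m

/-- The adjacent transposition `s_i`, interchanging `i` and `i + 1`. -/
def sAdj (i : ℕ) : Equiv.Perm ℕ := Equiv.swap i (i + 1)

/-- The Bruhat order on `S_n`: `u ≤ v` iff `v` is obtained from `u` by successively
multiplying on the right by transpositions, increasing the length at each step. -/
def BruhatLE (n : ℕ) (u v : Equiv.Perm ℕ) : Prop :=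
  Relation.ReflTransGen
    (fun a b => invNum n a < invNum n b ∧
      ∃ i j, 1 ≤ i ∧ i < j ∧ j ≤ n ∧ b = a * Equiv.swap i j) u v

/-- `(S_n)^J`, the minimal coset representatives, where `J = S \ {s_e : e ∈ E}`. -/
def MinReps (n : ℕ) (E : Set ℕ) (u : Equiv.Perm ℕ) : Prop :=
  ∀ j, 1 ≤ j → j ≤ n - 1 → j ∉ E → invNum n u < invNum n (sAdj j * u)

/-- `|{r ∈ u⁻¹([m]) : r < j}|`, the number of positions `r < j` of `u` holding
an element of `{1, …, m}`. -/
def posLT (n m j : ℕ) (u : Equiv.Perm ℕ) : ℕ :=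
  ((Finset.Icc 1 n).filter (fun r => r < j ∧ u r ∈ Finset.Icc 1 m)).card

/-- Deodhar's recursion with `x = q` for the parabolic `R`-polynomials of `S_n`,
for `J = S \ {s_e : e ∈ E}`. -/
def IsRFamilyQ (n : ℕ) (E : Set ℕ)
    (R : Equiv.Perm ℕ → Equiv.Perm ℕ → Polynomial ℤ) : Prop :=
  (∀ u v, MinReps n E u → MinReps n E v → ¬ BruhatLE n u v → R u v = 0) ∧
  (∀ u, MinReps n E u → R u u = 1) ∧
  (∀ u v, MinReps n E u → MinReps n E v → BruhatLE n u v → u ≠ v →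
    ∀ j, 1 ≤ j → j ≤ n - 1 → v (j + 1) < v j →
      ((u (j + 1) < u j → R u v = R (u * sAdj j) (v * sAdj j)) ∧
       (¬ u (j + 1) < u j → MinReps n E (u * sAdj j) →
          R u v = X * R (u * sAdj j) (v * sAdj j) + (X - 1) * R u (v * sAdj j)) ∧
       (¬ u (j + 1) < u j → ¬ MinReps n E (u * sAdj j) →
          R u v = - R u (v * sAdj j))))



/-- `#{r ∈ [1,a] : b ≤ w r}`. -/
def Dcnt (w : Equiv.Perm ℕ) (a b : ℕ) : ℕ :=
  ((Finset.Icc 1 a).filter (fun r => b ≤ w r)).card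

/-- `#{r ∈ (l,a] : b ≤ w r}`. -/
def Icnt (w : Equiv.Perm ℕ) (l a b : ℕ) : ℕ :=
  ((Finset.Ioc l a).filter (fun r => b ≤ w r)).card

lemma Dcnt_succ (w : Equiv.Perm ℕ) (a b : ℕ) :
    Dcnt w (a + 1) b = Dcnt w a b + (if b ≤ w (a + 1) then 1 else 0) := by
  unfold Dcnt
  rw [show Finset.Icc 1 (a+1) = insert (a+1) (Finset.Icc 1 a) by
    ext r; simp only [Finset.mem_Icc, Finset.mem_insert]; omega, Finset.filter_insert]
  split
  · rw [Finset.card_insert_of_notMem (by simp)]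
  · omega

lemma Dcnt_split (w : Equiv.Perm ℕ) {l a : ℕ} (h1 : 1 ≤ l) (h : l ≤ a) (b : ℕ) :
    Dcnt w a b = Dcnt w l b + Icnt w l a b := by
  unfold Dcnt Icnt
  rw [show Finset.Icc 1 a = Finset.Icc 1 l ∪ Finset.Ioc l a by
    rw [← Finset.coe_inj, Finset.coe_union, Finset.coe_Icc, Finset.coe_Icc, Finset.coe_Ioc,
      Set.Icc_union_Ioc_eq_Icc h1 h], Finset.filter_union]
  exact Finset.card_union_of_disjoint (by
    simp only [Finset.disjoint_left, Finset.mem_filter, Finset.mem_Icc, Finset.mem_Ioc]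
    omega)

lemma Dcnt_anti (w : Equiv.Perm ℕ) (a : ℕ) {b b' : ℕ} (h : b ≤ b') :
    Dcnt w a b' ≤ Dcnt w a b := by
  apply Finset.card_le_card
  intro r hr
  simp only [Finset.mem_filter] at *
  exact ⟨hr.1, le_trans h hr.2⟩

lemma Icnt_anti (w : Equiv.Perm ℕ) (l a : ℕ) {b b' : ℕ} (h : b ≤ b') :
    Icnt w l a b' ≤ Icnt w l a b := by
  apply Finset.card_le_card
  intro r hr
  simp only [Finset.mem_filter] at *
  exact ⟨hr.1, le_trans h hr.2⟩

/-- complement: `Dcnt w a b + #{r ∈ [1,a] : w r ≤ b-1} = a` for `b ≥ 1`. -/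
lemma Dcnt_compl (w : Equiv.Perm ℕ) (a b : ℕ) (hb : 1 ≤ b) :
    Dcnt w a b + ((Finset.Icc 1 a).filter (fun r => w r ≤ b - 1)).card = a := by
  classical
  unfold Dcnt
  rw [show (Finset.Icc 1 a).filter (fun r => w r ≤ b - 1)
      = (Finset.Icc 1 a).filter (fun r => ¬ b ≤ w r) from
    Finset.filter_congr (fun r _ => by constructor <;> omega)]
  rw [Finset.card_filter_add_card_filter_not, Nat.card_Icc]
  omega

section SwapLemmas

variable (w : Equiv.Perm ℕ) {x y : ℕ}

lemma Dcnt_swap_lt {a : ℕ} (hx : x ≤ y) (ha : a < x) (b : ℕ) :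
    Dcnt (w * Equiv.swap x y) a b = Dcnt w a b := by
  unfold Dcnt
  congr 1
  apply Finset.filter_congr
  intro r hr
  simp only [Finset.mem_Icc] at hr
  rw [Equiv.Perm.mul_apply, Equiv.swap_apply_of_ne_of_ne (by omega) (by omega)]

lemma Dcnt_swap_mid {a : ℕ} (h1 : 1 ≤ x) (hxa : x ≤ a) (hay : a < y) (b : ℕ) :
    Dcnt (w * Equiv.swap x y) a b + (if b ≤ w x then 1 else 0)
      = Dcnt w a b + (if b ≤ w y then 1 else 0) := by
  classical
  unfold Dcnt
  set S := (Finset.Icc 1 a).filter (fun r => b ≤ w r) with hS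
  set S' := (Finset.Icc 1 a).filter (fun r => b ≤ (w * Equiv.swap x y) r) with hS'
  have herase : S'.erase x = S.erase x := by
    ext r
    simp only [Finset.mem_erase, hS, hS', Finset.mem_filter, Finset.mem_Icc]
    constructor
    · rintro ⟨hne, ⟨h1r, h2r⟩, h3⟩
      rw [Equiv.Perm.mul_apply, Equiv.swap_apply_of_ne_of_ne hne (by omega)] at h3
      exact ⟨hne, ⟨h1r, h2r⟩, h3⟩
    · rintro ⟨hne, ⟨h1r, h2r⟩, h3⟩
      refine ⟨hne, ⟨h1r, h2r⟩, ?_⟩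
      rw [Equiv.Perm.mul_apply, Equiv.swap_apply_of_ne_of_ne hne (by omega)]
      exact h3
  have cardeq : ∀ (T : Finset ℕ) (c : Prop) [Decidable c], (x ∈ T ↔ c) →
      T.card = (T.erase x).card + (if c then 1 else 0) := by
    intro T c _ hiff
    by_cases hx : x ∈ T
    · rw [if_pos (hiff.mp hx), Finset.card_erase_of_mem hx]
      have : 1 ≤ T.card := Finset.card_pos.mpr ⟨x, hx⟩
      omega
    · rw [if_neg (fun hc => hx (hiff.mpr hc)), Finset.erase_eq_of_notMem hx]
      omega
  have hxS : x ∈ S ↔ b ≤ w x := by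
    simp only [hS, Finset.mem_filter, Finset.mem_Icc]
    constructor
    · tauto
    · intro h; exact ⟨⟨h1, hxa⟩, h⟩
  have hxS' : x ∈ S' ↔ b ≤ w y := by
    simp only [hS', Finset.mem_filter, Finset.mem_Icc]
    simp only [Equiv.Perm.mul_apply, Equiv.swap_apply_left]
    constructor
    · tauto
    · intro h; exact ⟨⟨h1, hxa⟩, h⟩
  rw [cardeq S _ hxS, cardeq S' _ hxS', herase]
  omega

lemma Dcnt_swap_ge {a : ℕ} (h1 : 1 ≤ x) (hxy : x ≤ y) (hya : y ≤ a) (b : ℕ) :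
    Dcnt (w * Equiv.swap x y) a b = Dcnt w a b := by
  unfold Dcnt
  have hmem : ∀ r, r ∈ Finset.Icc 1 a → Equiv.swap x y r ∈ Finset.Icc 1 a := by
    intro r hr
    simp only [Finset.mem_Icc] at *
    rw [Equiv.swap_apply_def]
    split
    · omega
    · split <;> omega
  apply Finset.card_bij' (fun r _ => Equiv.swap x y r) (fun r _ => Equiv.swap x y r)
  · intro r hr
    simp only [Finset.mem_filter] at *
    refine ⟨hmem r hr.1, ?_⟩
    have := hr.2
    rw [Equiv.Perm.mul_apply] at this
    exact this
  · intro r hr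
    simp only [Finset.mem_filter] at *
    refine ⟨hmem r hr.1, ?_⟩
    have := hr.2
    rw [Equiv.Perm.mul_apply, Equiv.swap_apply_self]
    exact this
  · intro r _; exact Equiv.swap_apply_self x y r
  · intro r _; exact Equiv.swap_apply_self x y r

end SwapLemmas

/-! ### invNum lemmas -/

lemma swap_mem_Icc {n x y r : ℕ} (hx : x ∈ Finset.Icc 1 n) (hy : y ∈ Finset.Icc 1 n)
    (hr : r ∈ Finset.Icc 1 n) : Equiv.swap x y r ∈ Finset.Icc 1 n := by
  simp only [Finset.mem_Icc] at *
  rw [Equiv.swap_apply_def]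
  split
  · omega
  · split <;> omega

/-- Reindexing pair-counts by the swap `σ = (x y)`. -/
lemma card_pairs_swap {n x y : ℕ} (hx : x ∈ Finset.Icc 1 n) (hy : y ∈ Finset.Icc 1 n)
    (Q : ℕ → ℕ → Prop) [∀ a b, Decidable (Q a b)] :
    (((Finset.Icc 1 n) ×ˢ (Finset.Icc 1 n)).filter (fun p => Q p.1 p.2)).card
      = (((Finset.Icc 1 n) ×ˢ (Finset.Icc 1 n)).filter
          (fun p => Q (Equiv.swap x y p.1) (Equiv.swap x y p.2))).card := by
  apply Finset.card_bij' (fun p _ => (Equiv.swap x y p.1, Equiv.swap x y p.2))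
    (fun p _ => (Equiv.swap x y p.1, Equiv.swap x y p.2))
  · intro p hp
    simp only [Finset.mem_filter, Finset.mem_product] at *
    exact ⟨⟨swap_mem_Icc hx hy hp.1.1, swap_mem_Icc hx hy hp.1.2⟩, by
      simpa [Equiv.swap_apply_self] using hp.2⟩
  · intro p hp
    simp only [Finset.mem_filter, Finset.mem_product] at *
    exact ⟨⟨swap_mem_Icc hx hy hp.1.1, swap_mem_Icc hx hy hp.1.2⟩, by
      simpa [Equiv.swap_apply_self] using hp.2⟩
  · intro p _; simp [Equiv.swap_apply_self]
  · intro p _; simp [Equiv.swap_apply_self]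

/-- Key lemma: right-multiplying by a transposition `(x y)` with `x < y` and
`w x < w y` strictly increases the inversion number. -/
lemma invNum_lt_swap {n x y : ℕ} (w : Equiv.Perm ℕ) (hx : 1 ≤ x) (hxy : x < y)
    (hy : y ≤ n) (hw : w x < w y) :
    invNum n w < invNum n (w * Equiv.swap x y) := by
  classical
  set T := (Finset.Icc 1 n) ×ˢ (Finset.Icc 1 n) with hT
  have hxI : x ∈ Finset.Icc 1 n := by simp only [Finset.mem_Icc]; omega
  have hyI : y ∈ Finset.Icc 1 n := by simp only [Finset.mem_Icc]; omega
  set σ := Equiv.swap x y with hσ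
  -- invNum n (w * σ) as a reindexed count
  have step1 : invNum n (w * σ) = (T.filter (fun p => σ p.1 < σ p.2 ∧ w p.2 < w p.1)).card := by
    unfold invNum
    rw [← hT]
    rw [card_pairs_swap hxI hyI (fun a b => a < b ∧ (w * σ) b < (w * σ) a)]
    congr 1
    apply Finset.filter_congr
    intro p _
    simp only [hσ, Equiv.Perm.mul_apply, Equiv.swap_apply_self]
  -- complements
  have compl : ∀ (R : ℕ → ℕ → Prop) [∀ a b, Decidable (R a b)], (∀ a, ¬ R a a) →
      (T.filter (fun p => R p.1 p.2 ∧ w p.2 < w p.1)).card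
        + (T.filter (fun p => R p.1 p.2 ∧ w p.1 < w p.2)).card
      = (T.filter (fun p => R p.1 p.2)).card := by
    intro R _ hirr
    rw [show T.filter (fun p => R p.1 p.2 ∧ w p.2 < w p.1)
        = (T.filter (fun p => R p.1 p.2)).filter (fun p => w p.2 < w p.1) by
      rw [Finset.filter_filter]]
    rw [show T.filter (fun p => R p.1 p.2 ∧ w p.1 < w p.2)
        = (T.filter (fun p => R p.1 p.2)).filter (fun p => ¬ w p.2 < w p.1) by
      rw [Finset.filter_filter]
      apply Finset.filter_congr
      intro p _
      constructor
      · rintro ⟨h1, h2⟩; exact ⟨h1, by omega⟩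
      · rintro ⟨h1, h2⟩
        refine ⟨h1, ?_⟩
        have hne : p.1 ≠ p.2 := fun he => hirr p.1 (he ▸ h1)
        have : w p.1 ≠ w p.2 := fun he => hne (w.injective he)
        omega]
    exact Finset.card_filter_add_card_filter_not _
  have step3 : (T.filter (fun p => σ p.1 < σ p.2)).card
      = (T.filter (fun p => (p.1 : ℕ) < p.2)).card := by
    rw [card_pairs_swap hxI hyI (fun a b => a < b)]
  -- Step 4: strict comparison of non-inversion counts
  set S : Finset (ℕ × ℕ) := T.filter (fun p => σ p.1 < σ p.2 ∧ w p.1 < w p.2) with hSdef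
  set Tg : Finset (ℕ × ℕ) := T.filter (fun p => p.1 < p.2 ∧ w p.1 < w p.2) with hTgdef
  have hxyTg : (x, y) ∈ Tg := by
    simp only [hTgdef, hT, Finset.mem_filter, Finset.mem_product, Finset.mem_Icc]
    exact ⟨⟨⟨hx, by omega⟩, ⟨by omega, hy⟩⟩, hxy, hw⟩
  have hswap_ne : ∀ {r : ℕ}, r ≠ x → r ≠ y → σ r = r := fun h1 h2 =>
    Equiv.swap_apply_of_ne_of_ne h1 h2
  have hmain : S.card < Tg.card := by
    have hcard : S.card ≤ (Tg.erase (x, y)).card := by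
      apply Finset.card_le_card_of_injOn (fun p => if p.1 < p.2 then p else (σ p.1, σ p.2))
      · intro p hp
        simp only [hSdef, hT, Finset.mem_coe, Finset.mem_filter, Finset.mem_product] at hp ⊢
        obtain ⟨⟨hr, hs⟩, hσrs, hwrs⟩ := hp
        by_cases hlt : p.1 < p.2
        · rw [if_pos hlt]
          rw [Finset.mem_erase]
          constructor
          · intro he
            rw [he] at hσrs
            simp only [hσ, Equiv.swap_apply_left, Equiv.swap_apply_right] at hσrs
            omega
          · simp only [hTgdef, hT, Finset.mem_filter, Finset.mem_product]
            exact ⟨⟨hr, hs⟩, hlt, hwrs⟩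
        · rw [if_neg hlt]
          have hne : p.1 ≠ p.2 := fun he => by rw [he] at hwrs; omega
          have hsr : p.2 < p.1 := by omega
          have hxIcc : x ∈ Finset.Icc 1 n := hxI
          -- case analysis on the shape of the flipped pair
          rcases eq_or_ne p.1 x with h1x | h1x
          · -- p.1 = x: impossible
            exfalso
            have hs2 : p.2 < x := by omega
            have : σ p.1 = y := by rw [h1x]; exact Equiv.swap_apply_left x y
            have h2 : σ p.2 = p.2 := hswap_ne (by omega) (by omega)
            rw [this, h2] at hσrs
            omega
          · rcases eq_or_ne p.1 y with h1y | h1y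
            · -- p.1 = y
              have hσ1 : σ p.1 = x := by rw [h1y]; exact Equiv.swap_apply_right x y
              rcases eq_or_ne p.2 x with h2x | h2x
              · -- (y, x): contradicts w x < w y
                exfalso
                have : σ p.2 = y := by rw [h2x]; exact Equiv.swap_apply_left x y
                rw [h1y, h2x] at hwrs
                omega
              · have h2y : p.2 ≠ y := by omega
                have hσ2 : σ p.2 = p.2 := hswap_ne h2x h2y
                rw [Finset.mem_erase]
                constructor
                · intro he
                  rw [hσ1, hσ2] at he
                  have := congrArg Prod.snd he
                  simp only at this
                  exact h2y this
                · simp only [hTgdef, hT, Finset.mem_filter, Finset.mem_product]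
                  refine ⟨⟨swap_mem_Icc hxI hyI hr, swap_mem_Icc hxI hyI hs⟩, ?_, ?_⟩
                  · rw [hσ1, hσ2]; rw [hσ1, hσ2] at hσrs; exact hσrs
                  · rw [hσ1, hσ2]
                    rw [h1y] at hwrs
                    omega
            · -- p.1 ∉ {x, y}
              have hσ1 : σ p.1 = p.1 := hswap_ne h1x h1y
              rcases eq_or_ne p.2 x with h2x | h2x
              · have hσ2 : σ p.2 = y := by rw [h2x]; exact Equiv.swap_apply_left x y
                rw [Finset.mem_erase]
                constructor
                · intro he
                  rw [hσ1, hσ2] at he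
                  have := congrArg Prod.fst he
                  simp only at this
                  exact h1x this
                · simp only [hTgdef, hT, Finset.mem_filter, Finset.mem_product]
                  refine ⟨⟨swap_mem_Icc hxI hyI hr, swap_mem_Icc hxI hyI hs⟩, ?_, ?_⟩
                  · rw [hσ1, hσ2]; rw [hσ1, hσ2] at hσrs; exact hσrs
                  · rw [hσ1, hσ2]
                    rw [h2x] at hwrs
                    omega
              · -- p.2 ∉ {x}: then p.2 = y or neither, both contradictions
                exfalso
                rcases eq_or_ne p.2 y with h2y | h2y
                · have hσ2 : σ p.2 = x := by rw [h2y]; exact Equiv.swap_apply_right x y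
                  rw [hσ1, hσ2] at hσrs
                  -- p.1 < x, but p.1 > p.2 = y > x
                  omega
                · have hσ2 : σ p.2 = p.2 := hswap_ne h2x h2y
                  rw [hσ1, hσ2] at hσrs
                  omega
      · intro p hp q hq he
        dsimp only at he
        simp only [hSdef, Finset.mem_coe, Finset.mem_filter] at hp hq
        by_cases hp1 : p.1 < p.2 <;> by_cases hq1 : q.1 < q.2
        · rwa [if_pos hp1, if_pos hq1] at he
        · exfalso
          rw [if_pos hp1, if_neg hq1] at he
          have e1 : p.1 = σ q.1 := congrArg Prod.fst he
          have e2 : p.2 = σ q.2 := congrArg Prod.snd he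
          rw [e1, e2] at hp
          have := hp.2.1
          simp only [hσ, Equiv.swap_apply_self] at this
          exact hq1 this
        · exfalso
          rw [if_neg hp1, if_pos hq1] at he
          have e1 : σ p.1 = q.1 := congrArg Prod.fst he
          have e2 : σ p.2 = q.2 := congrArg Prod.snd he
          rw [← e1, ← e2] at hq
          have := hq.2.1
          simp only [hσ, Equiv.swap_apply_self] at this
          exact hp1 this
        · rw [if_neg hp1, if_neg hq1] at he
          have e1 : σ p.1 = σ q.1 := congrArg Prod.fst he
          have e2 : σ p.2 = σ q.2 := congrArg Prod.snd he
          have f1 : p.1 = q.1 := σ.injective e1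
          have f2 : p.2 = q.2 := σ.injective e2
          exact Prod.ext f1 f2
    have h1 : (Tg.erase (x, y)).card = Tg.card - 1 := Finset.card_erase_of_mem hxyTg
    have h2 : 1 ≤ Tg.card := Finset.card_pos.mpr ⟨_, hxyTg⟩
    omega
  -- assemble
  have c1 := compl (fun a b => a < b) (fun a => lt_irrefl a)
  have c2 := compl (fun a b => σ a < σ b) (fun a => lt_irrefl (σ a))
  have hKdef : invNum n w = (T.filter (fun p => p.1 < p.2 ∧ w p.2 < w p.1)).card := by
    unfold invNum; rw [← hT]
  rw [← hTgdef] at c1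
  rw [← hSdef, step3] at c2
  rw [hKdef, step1]
  omega

/-! ### IsPermOn helpers -/

lemma IsPermOn.mem_Icc {n : ℕ} {w : Equiv.Perm ℕ} (h : IsPermOn n w) {a : ℕ}
    (ha : a ∈ Finset.Icc 1 n) : w a ∈ Finset.Icc 1 n := by
  by_contra hc
  have h2 : w (w a) = w a := h _ hc
  have : w a = a := w.injective h2
  rw [this] at hc
  exact hc ha

lemma IsPermOn.symm {n : ℕ} {w : Equiv.Perm ℕ} (h : IsPermOn n w) : IsPermOn n w.symm := by
  intro m hm
  have := h m hm
  conv_lhs => rw [← this]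
  exact w.symm_apply_apply m

lemma IsPermOn.mul_swap {n x y : ℕ} {w : Equiv.Perm ℕ} (h : IsPermOn n w)
    (hx : x ∈ Finset.Icc 1 n) (hy : y ∈ Finset.Icc 1 n) :
    IsPermOn n (w * Equiv.swap x y) := by
  intro m hm
  have hmx : m ≠ x := fun he => hm (by rw [he]; exact hx)
  have hmy : m ≠ y := fun he => hm (by rw [he]; exact hy)
  rw [Equiv.Perm.mul_apply, Equiv.swap_apply_of_ne_of_ne hmx hmy]
  exact h m hm

/-! ### Dominance order -/

def Dom (n : ℕ) (u v : Equiv.Perm ℕ) : Prop :=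
  ∀ a b, a ≤ n → Dcnt u a b ≤ Dcnt v a b

lemma Dcnt_le_mul_swap {x y : ℕ} (w : Equiv.Perm ℕ) (h1 : 1 ≤ x) (hxy : x < y)
    (hw : w x < w y) (a b : ℕ) : Dcnt w a b ≤ Dcnt (w * Equiv.swap x y) a b := by
  rcases lt_or_ge a x with hax | hax
  · rw [Dcnt_swap_lt w (le_of_lt hxy) hax]
  rcases lt_or_ge a y with hay | hay
  · have := Dcnt_swap_mid w h1 hax hay b
    split_ifs at this with h1' h2' <;> omega
  · rw [Dcnt_swap_ge w h1 (le_of_lt hxy) hay]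

lemma swap_lt_of_invNum_lt {n x y : ℕ} {w : Equiv.Perm ℕ} (h1 : 1 ≤ x) (hxy : x < y)
    (hy : y ≤ n) (hinv : invNum n w < invNum n (w * Equiv.swap x y)) : w x < w y := by
  rcases lt_trichotomy (w x) (w y) with h | h | h
  · exact h
  · exact absurd (w.injective h) (by omega)
  · exfalso
    set w' := w * Equiv.swap x y with hw'
    have hx' : w' x < w' y := by
      simp only [hw', Equiv.Perm.mul_apply, Equiv.swap_apply_left, Equiv.swap_apply_right]
      exact h
    have := invNum_lt_swap (n := n) w' h1 hxy hy hx'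
    have he : w' * Equiv.swap x y = w := by
      rw [hw', mul_assoc, Equiv.swap_mul_self, mul_one]
    rw [he] at this
    omega

lemma Dom.refl (n : ℕ) (u : Equiv.Perm ℕ) : Dom n u u := fun _ _ _ => le_refl _

lemma bruhat_dom {n : ℕ} {u v : Equiv.Perm ℕ} (h : BruhatLE n u v) : Dom n u v := by
  induction h with
  | refl => exact Dom.refl n u
  | tail hab hbc ih =>
    obtain ⟨hinv, x, y, hx1, hxy, hyn, rfl⟩ := hbc
    intro a b han
    refine le_trans (ih a b han) ?_
    exact Dcnt_le_mul_swap _ hx1 hxy (swap_lt_of_invNum_lt hx1 hxy hyn hinv) a b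

/-! ### Dominance implies Bruhat order -/

lemma dom_bruhat {n : ℕ} (v : Equiv.Perm ℕ) (hv : IsPermOn n v) :
    ∀ N (u : Equiv.Perm ℕ), IsPermOn n u → Dom n u v →
      (∑ p ∈ (Finset.Icc 1 n ×ˢ Finset.Icc 1 n),
        (Dcnt v p.1 p.2 - Dcnt u p.1 p.2)) ≤ N → BruhatLE n u v := by
  intro N
  induction N using Nat.strong_induction_on with
  | _ N IH =>
    intro u hu hdom hN
    by_cases huv : u = v
    · subst huv; exact Relation.ReflTransGen.refl
    -- first position where u and v differ
    have hFne : ((Finset.Icc 1 n).filter (fun r => u r ≠ v r)).Nonempty := by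
      by_contra hc
      apply huv
      rw [Finset.not_nonempty_iff_eq_empty, Finset.filter_eq_empty_iff] at hc
      apply Equiv.ext
      intro m
      by_cases hm : m ∈ Finset.Icc 1 n
      · by_contra hne
        exact hc hm hne
      · rw [hu m hm, hv m hm]
    set F := (Finset.Icc 1 n).filter (fun r => u r ≠ v r) with hF
    set a := F.min' hFne with ha
    have haF : a ∈ F := Finset.min'_mem _ _
    have haIcc : a ∈ Finset.Icc 1 n := (Finset.mem_filter.mp haF).1
    have hane : u a ≠ v a := (Finset.mem_filter.mp haF).2
    have ha1 : 1 ≤ a := (Finset.mem_Icc.mp haIcc).1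
    have han : a ≤ n := (Finset.mem_Icc.mp haIcc).2
    have hprefix : ∀ r, r < a → r ∈ Finset.Icc 1 n → u r = v r := by
      intro r hr hrIcc
      by_contra hne
      have : r ∈ F := Finset.mem_filter.mpr ⟨hrIcc, hne⟩
      have := Finset.min'_le _ _ this
      omega
    have hDpre : ∀ α β, α < a → Dcnt u α β = Dcnt v α β := by
      intro α β hα
      unfold Dcnt
      congr 1
      apply Finset.filter_congr
      intro r hr
      simp only [Finset.mem_Icc] at hr
      rw [hprefix r (by omega) (by simp only [Finset.mem_Icc]; omega)]
    have hDsplit : ∀ (w : Equiv.Perm ℕ) β,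
        Dcnt w a β = Dcnt w (a - 1) β + (if β ≤ w a then 1 else 0) := by
      intro w β
      have : a = (a - 1) + 1 := by omega
      rw [this, Dcnt_succ, ← this]
    have huaIcc : u a ∈ Finset.Icc 1 n := hu.mem_Icc haIcc
    have hvaIcc : v a ∈ Finset.Icc 1 n := hv.mem_Icc haIcc
    have hua_lt : u a < v a := by
      have h1 := hdom a (u a) han
      rw [hDsplit u (u a), hDsplit v (u a), hDpre (a - 1) (u a) (by omega)] at h1
      rw [if_pos (le_refl _)] at h1
      by_contra hc
      rw [if_neg (by omega)] at h1
      omega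
    -- minimal witness position c
    have hCne : ((Finset.Icc 1 n).filter
        (fun s => a < s ∧ u a < u s ∧ u s ≤ v a)).Nonempty := by
      refine ⟨u.symm (v a), Finset.mem_filter.mpr ⟨hu.symm.mem_Icc hvaIcc, ?_⟩⟩
      have hs0 : u (u.symm (v a)) = v a := u.apply_symm_apply (v a)
      have hne : u.symm (v a) ≠ a := by
        intro he
        have h' := hs0
        rw [he] at h'
        exact hane h'
      have hnlt : ¬ u.symm (v a) < a := by
        intro hlt
        have h1 := hprefix _ hlt (hu.symm.mem_Icc hvaIcc)
        rw [hs0] at h1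
        exact hne (v.injective h1.symm)
      refine ⟨by omega, by rw [hs0]; exact hua_lt, by rw [hs0]⟩
    set C := (Finset.Icc 1 n).filter (fun s => a < s ∧ u a < u s ∧ u s ≤ v a) with hC
    set c := C.min' hCne with hc
    have hcC : c ∈ C := Finset.min'_mem _ _
    obtain ⟨hcIcc, hac, huac, hucva⟩ := Finset.mem_filter.mp hcC
    have hcn : c ≤ n := (Finset.mem_Icc.mp hcIcc).2
    have hcmin : ∀ s, s ∈ Finset.Icc 1 n → a < s → s < c → ¬(u a < u s ∧ u s ≤ v a) := by
      intro s hsIcc has hsc hcontra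
      have : s ∈ C := Finset.mem_filter.mpr ⟨hsIcc, has, hcontra⟩
      have := Finset.min'_le _ _ this
      omega
    set u' := u * Equiv.swap a c with hu'
    have hinv : invNum n u < invNum n u' := invNum_lt_swap u ha1 hac hcn huac
    have hu'perm : IsPermOn n u' := hu.mul_swap haIcc hcIcc
    -- dominance of u' below v
    have hdom' : Dom n u' v := by
      intro α β hαn
      rcases lt_or_ge α a with hαa | hαa
      · rw [hu', Dcnt_swap_lt u (le_of_lt hac) hαa]
        exact hdom α β hαn
      rcases lt_or_ge α c with hαc | hαc
      swap
      · rw [hu', Dcnt_swap_ge u ha1 (le_of_lt hac) hαc]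
        exact hdom α β hαn
      · have hmid := Dcnt_swap_mid u ha1 hαa hαc β
        rw [← hu'] at hmid
        by_cases hβ1 : β ≤ u a
        · rw [if_pos hβ1, if_pos (by omega)] at hmid
          have := hdom α β hαn
          omega
        by_cases hβ2 : u c < β
        · rw [if_neg hβ1, if_neg (by omega)] at hmid
          have := hdom α β hαn
          omega
        -- the interesting case: u a < β ≤ u c
        rw [if_neg hβ1, if_pos (by omega)] at hmid
        have hβva : β ≤ v a := by omega
        have key : Dcnt u α β + 1 ≤ Dcnt v α β := by
          have e1 := Dcnt_split u ha1 hαa β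
          have e2 := Dcnt_split v ha1 hαa β
          have e3 := hDsplit u β
          rw [if_neg hβ1] at e3
          have e4 := hDsplit v β
          rw [if_pos hβva] at e4
          have e5 := hDpre (a - 1) β (by omega)
          have i1 : Icnt u a α β ≤ Icnt u a α (v a + 1) := by
            apply Finset.card_le_card
            intro r hr
            simp only [Finset.mem_filter, Finset.mem_Ioc] at hr ⊢
            refine ⟨hr.1, ?_⟩
            have hrIcc : r ∈ Finset.Icc 1 n := by
              simp only [Finset.mem_Icc]
              omega
            have := hcmin r hrIcc (by omega) (by omega)
            have : ¬ u r ≤ v a := fun hle => this ⟨by omega, hle⟩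
            omega
          have i2 := Dcnt_split u ha1 hαa (v a + 1)
          have i3 := hdom α (v a + 1) hαn
          have i4 := hDsplit u (v a + 1)
          rw [if_neg (by omega)] at i4
          have i5 := hDsplit v (v a + 1)
          rw [if_neg (by omega)] at i5
          have i6 := hDpre (a - 1) (v a + 1) (by omega)
          have i7 := Dcnt_split v ha1 hαa (v a + 1)
          have i8 : Icnt v a α (v a + 1) ≤ Icnt v a α β := Icnt_anti v a α (by omega)
          omega
        omega
    -- measure strictly decreases
    have hmeas : (∑ p ∈ (Finset.Icc 1 n ×ˢ Finset.Icc 1 n),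
        (Dcnt v p.1 p.2 - Dcnt u' p.1 p.2))
        < ∑ p ∈ (Finset.Icc 1 n ×ˢ Finset.Icc 1 n),
        (Dcnt v p.1 p.2 - Dcnt u p.1 p.2) := by
      apply Finset.sum_lt_sum
      · intro p hp
        simp only [Finset.mem_product, Finset.mem_Icc] at hp
        have h1 : Dcnt u p.1 p.2 ≤ Dcnt u' p.1 p.2 :=
          Dcnt_le_mul_swap u ha1 hac huac p.1 p.2
        omega
      · refine ⟨(a, u c), Finset.mem_product.mpr ⟨haIcc, hu.mem_Icc hcIcc⟩, ?_⟩
        have hmid := Dcnt_swap_mid u ha1 (le_refl a) hac (u c)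
        rw [← hu', if_neg (by omega), if_pos (le_refl _)] at hmid
        have h2 := hdom' a (u c) han
        simp only
        omega
    exact Relation.ReflTransGen.head
      ⟨hinv, a, c, ha1, hac, hcn, rfl⟩
      (IH _ (by omega) u' hu'perm hdom' (le_refl _))

/-! ### MinReps and the inverse permutation -/

lemma MinReps.symm_lt {n : ℕ} {E : Set ℕ} {w : Equiv.Perm ℕ} (hw : IsPermOn n w)
    (h : MinReps n E w) {k : ℕ} (hk1 : 1 ≤ k) (hkn : k + 1 ≤ n) (hkE : k ∉ E) :
    w.symm k < w.symm (k + 1) := by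
  have hstep := h k hk1 (by omega) hkE
  set x := w.symm k with hx
  set y := w.symm (k + 1) with hy
  have hwx : w x = k := w.apply_symm_apply k
  have hwy : w y = k + 1 := w.apply_symm_apply (k + 1)
  have hxy : x ≠ y := by
    intro he
    rw [he, hwy] at hwx
    omega
  have heq : sAdj k * w = w * Equiv.swap x y := by
    apply Equiv.ext
    intro r
    simp only [sAdj, Equiv.Perm.mul_apply]
    rcases eq_or_ne r x with rfl | hrx
    · rw [Equiv.swap_apply_left, hwx, hwy, Equiv.swap_apply_left]
    rcases eq_or_ne r y with rfl | hry
    · rw [Equiv.swap_apply_right, hwy, hwx, Equiv.swap_apply_right]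
    · rw [Equiv.swap_apply_of_ne_of_ne hrx hry,
        Equiv.swap_apply_of_ne_of_ne (fun he => hrx (w.injective (by rw [he, hwx])))
          (fun he => hry (w.injective (by rw [he, hwy])))]
  rw [heq] at hstep
  have hxIcc : x ∈ Finset.Icc 1 n := hw.symm.mem_Icc (by simp only [Finset.mem_Icc]; omega)
  have hyIcc : y ∈ Finset.Icc 1 n := hw.symm.mem_Icc (by simp only [Finset.mem_Icc]; omega)
  simp only [Finset.mem_Icc] at hxIcc hyIcc
  rcases lt_or_gt_of_ne hxy with hlt | hgt
  · exact hlt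
  · exfalso
    rw [Equiv.swap_comm] at hstep
    have := swap_lt_of_invNum_lt (by omega) hgt (by omega) hstep
    rw [hwx, hwy] at this
    omega

lemma MinReps.symm_mono {n i : ℕ} {w : Equiv.Perm ℕ} (hw : IsPermOn n w)
    (h : MinReps n {i - 2, i - 1, i} w) (hi : 3 ≤ i) (hin : i ≤ n - 1)
    {k k' : ℕ} (hk : 1 ≤ k) (hkk : k < k') (hk' : k' ≤ i - 2) :
    w.symm k < w.symm k' := by
  induction k' with
  | zero => omega
  | succ m ih =>
    have hmE : m ∉ ({i - 2, i - 1, i} : Set ℕ) := by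
      simp only [Set.mem_insert_iff, Set.mem_singleton_iff]
      omega
    have hstep : w.symm m < w.symm (m + 1) :=
      MinReps.symm_lt hw h (by omega) (by omega) hmE
    rcases eq_or_lt_of_le (Nat.lt_succ_iff.mp hkk) with rfl | hlt
    · exact hstep
    · exact lt_trans (ih hlt (by omega)) hstep

/-- Removing the single value `b` : `Dcnt w j b = Dcnt w j (b+1) + [w⁻¹ b ∈ [1,j]]`. -/
lemma Dcnt_step_val (w : Equiv.Perm ℕ) (j b : ℕ) :
    Dcnt w j b = Dcnt w j (b + 1)
      + (if 1 ≤ w.symm b ∧ w.symm b ≤ j then 1 else 0) := by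
  classical
  unfold Dcnt
  have hsplit : (Finset.Icc 1 j).filter (fun r => b ≤ w r)
      = (Finset.Icc 1 j).filter (fun r => b + 1 ≤ w r)
        ∪ (Finset.Icc 1 j).filter (fun r => w r = b) := by
    rw [← Finset.filter_or]
    apply Finset.filter_congr
    intro r _
    constructor
    · intro h; omega
    · intro h; omega
  rw [hsplit, Finset.card_union_of_disjoint (by
    simp only [Finset.disjoint_left, Finset.mem_filter]
    rintro r ⟨_, h1⟩ ⟨_, h2⟩
    omega)]
  congr 1
  have : (Finset.Icc 1 j).filter (fun r => w r = b)
      = if 1 ≤ w.symm b ∧ w.symm b ≤ j then {w.symm b} else ∅ := by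
    ext r
    have hiff : w r = b ↔ r = w.symm b := by
      constructor
      · intro h; rw [← h, Equiv.symm_apply_apply]
      · intro h; rw [h, Equiv.apply_symm_apply]
    split_ifs with hcase
    · simp only [Finset.mem_filter, Finset.mem_Icc, Finset.mem_singleton]
      constructor
      · rintro ⟨_, h2⟩; exact hiff.mp h2
      · intro h; subst h; exact ⟨⟨hcase.1, hcase.2⟩, hiff.mpr rfl⟩
    · simp only [Finset.mem_filter, Finset.mem_Icc, Finset.notMem_empty, iff_false]
      rintro ⟨⟨h1, h2⟩, h3⟩
      rw [← hiff.mp h3] at hcase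
      exact hcase ⟨h1, h2⟩
  rw [this]
  split_ifs <;> simp

lemma Dcnt_zero (w : Equiv.Perm ℕ) (a : ℕ) : Dcnt w a 0 = a := by
  unfold Dcnt
  rw [Finset.filter_true_of_mem (fun r _ => Nat.zero_le _), Nat.card_Icc]
  omega


/-- Subcase (iii) claim: with `u⁻¹(i-1) ≥ v⁻¹(i-1)`, `u⁻¹(i) < v⁻¹(i)`, `s_j` a right
descent of `v` with `v j = i - 1`, `v (j+1) < i - 1`, `s_j` not a right descent of `u`
with `u j < i - 1` and `u (j+1) = i`, one has `u s_j ≤ v s_j` in the Bruhat order. -/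
theorem subcase_iii_claim (n i j : ℕ) (hi1 : 3 ≤ i) (hi2 : i ≤ n - 1)
    (hj1 : 1 ≤ j) (hj2 : j ≤ n - 1)
    (u v : Equiv.Perm ℕ) (hu : IsPermOn n u) (hv : IsPermOn n v)
    (hu' : MinReps n {i - 2, i - 1, i} u) (hv' : MinReps n {i - 2, i - 1, i} v)
    (huv : BruhatLE n u v)
    (h1 : v.symm (i - 1) ≤ u.symm (i - 1)) (h2 : u.symm i < v.symm i)
    (hvj : v j = i - 1) (hvj1 : v (j + 1) < i - 1)
    (huj : u j < i - 1) (huj1 : u (j + 1) = i) :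
    BruhatLE n (u * sAdj j) (v * sAdj j) := by
  classical
  have hn4 : 4 ≤ n := by omega
  have hjn : j + 1 ≤ n := by omega
  have hjIcc : j ∈ Finset.Icc 1 n := by simp only [Finset.mem_Icc]; omega
  have hj1Icc : j + 1 ∈ Finset.Icc 1 n := by simp only [Finset.mem_Icc]; omega
  have hdomuv : Dom n u v := bruhat_dom huv
  have hvsymm : v.symm (i - 1) = j := by rw [Equiv.symm_apply_eq]; exact hvj.symm
  have husymm_i1 : j + 1 ≤ u.symm (i - 1) := by
    rw [hvsymm] at h1
    have hne : u.symm (i - 1) ≠ j := by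
      intro he
      have : u j = i - 1 := by rw [← he, Equiv.apply_symm_apply]
      omega
    omega
  have hujIcc := hu.mem_Icc hjIcc
  have hvj1Icc := hv.mem_Icc hj1Icc
  simp only [Finset.mem_Icc] at hujIcc hvj1Icc
  have huj_ge1 : 1 ≤ u j := hujIcc.1
  have hvj1_ge1 : 1 ≤ v (j + 1) := hvj1Icc.1
  -- Key fact K1
  have K1 : Dcnt u j i + 1 ≤ Dcnt v j i := by
    have h0 := hdomuv (j + 1) i hjn
    rw [Dcnt_succ u j i, Dcnt_succ v j i, huj1, if_pos le_rfl,
      if_neg (by omega : ¬ i ≤ v (j + 1))] at h0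
    omega
  have K2 : Dcnt u j (i - 1) = Dcnt u j i := by
    have h0 := Dcnt_step_val u j (i - 1)
    rw [if_neg (by omega : ¬ (1 ≤ u.symm (i-1) ∧ u.symm (i-1) ≤ j)),
      show i - 1 + 1 = i by omega] at h0
    omega
  have K3 : Dcnt v j (i - 1) = Dcnt v j i + 1 := by
    have h0 := Dcnt_step_val v j (i - 1)
    rw [hvsymm, if_pos ⟨hj1, le_rfl⟩, show i - 1 + 1 = i by omega] at h0
    omega
  -- dominance of u s_j below v s_j
  have hsadj : sAdj j = Equiv.swap j (j + 1) := rfl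
  have hdomS : Dom n (u * sAdj j) (v * sAdj j) := by
    intro α β hαn
    rw [hsadj]
    rcases lt_or_ge α j with hαj | hαj
    · rw [Dcnt_swap_lt u (by omega) hαj, Dcnt_swap_lt v (by omega) hαj]
      exact hdomuv α β hαn
    rcases lt_or_ge α (j + 1) with hαj1 | hαj1
    swap
    · rw [Dcnt_swap_ge u hj1 (by omega) hαj1, Dcnt_swap_ge v hj1 (by omega) hαj1]
      exact hdomuv α β hαn
    have hαeq : α = j := by omega
    rw [hαeq]
    have hmU := Dcnt_swap_mid u hj1 le_rfl (by omega : j < j + 1) β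
    have hmV := Dcnt_swap_mid v hj1 le_rfl (by omega : j < j + 1) β
    rw [huj1] at hmU
    rw [hvj] at hmV
    -- the central inequality
    have star : Dcnt u j β + (if β ≤ i then 1 else 0) + (if β ≤ i - 1 then 1 else 0)
        ≤ Dcnt v j β + (if β ≤ v (j + 1) then 1 else 0) + (if β ≤ u j then 1 else 0) := by
      have hDub := hdomuv j β (by omega)
      rcases Nat.eq_zero_or_pos β with hβ0 | hβpos
      · subst hβ0
        rw [Dcnt_zero, Dcnt_zero]
        split_ifs <;> omega
      rcases le_or_gt β (i - 2) with hβle | hβgt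
      swap
      · -- β ≥ i - 1
        rcases le_or_gt β (i - 1) with hc1 | hc1
        · -- β = i - 1
          have hβeq : β = i - 1 := by omega
          subst hβeq
          split_ifs <;> omega
        rcases le_or_gt β i with hc2 | hc2
        · -- β = i
          have hβeq : β = i := by omega
          subst hβeq
          split_ifs <;> omega
        · -- β ≥ i + 1
          split_ifs <;> omega
      -- 1 ≤ β ≤ i - 2
      have CU := Dcnt_compl u j β (by omega)
      have CV := Dcnt_compl v j β (by omega)
      have C2U := Dcnt_compl u j (i - 1) (by omega)
      have C2V := Dcnt_compl v j (i - 1) (by omega)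
      rw [show i - 1 - 1 = i - 2 by omega] at C2U C2V
      have hujle : u j ≤ i - 2 := by omega
      -- (b) : E_v(β-1) ≤ β - 1
      have hb : ((Finset.Icc 1 j).filter (fun r => v r ≤ β - 1)).card
          ≤ (Finset.Icc 1 (β - 1)).card := by
        apply Finset.card_le_card_of_injOn (fun r => v r)
        · intro r hr
          simp only [Finset.mem_coe, Finset.mem_filter, Finset.mem_Icc] at hr ⊢
          have : v r ∈ Finset.Icc 1 n := hv.mem_Icc (by
            simp only [Finset.mem_Icc]; omega)
          simp only [Finset.mem_Icc] at this
          exact ⟨this.1, hr.2⟩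
        · intro r _ r' _ he
          exact v.injective he
      rw [Nat.card_Icc] at hb
      -- (f) : E_v(β-1) ≤ E_v(i-2)
      have hf : ((Finset.Icc 1 j).filter (fun r => v r ≤ β - 1)).card
          ≤ ((Finset.Icc 1 j).filter (fun r => v r ≤ i - 2)).card := by
        apply Finset.card_le_card
        intro r hr
        simp only [Finset.mem_filter] at hr ⊢
        exact ⟨hr.1, by omega⟩
      by_cases hβuj : β ≤ u j
      · -- (a) : β - 1 ≤ E_u(β-1)
        have ha : (Finset.Icc 1 (β - 1)).card
            ≤ ((Finset.Icc 1 j).filter (fun r => u r ≤ β - 1)).card := by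
          apply Finset.card_le_card_of_injOn (fun k => u.symm k)
          · intro k hk
            simp only [Finset.mem_coe, Finset.mem_Icc] at hk
            have hkn : k ∈ Finset.Icc 1 n := by simp only [Finset.mem_Icc]; omega
            have hsymm_mem := hu.symm.mem_Icc hkn
            simp only [Finset.mem_Icc] at hsymm_mem
            have hlt : u.symm k < u.symm (u j) :=
              MinReps.symm_mono hu hu' hi1 hi2 hk.1 (by omega) hujle
            rw [Equiv.symm_apply_apply] at hlt
            simp only [Finset.mem_coe, Finset.mem_filter, Finset.mem_Icc]
            refine ⟨⟨hsymm_mem.1, by omega⟩, ?_⟩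
            rw [Equiv.apply_symm_apply]
            exact hk.2
          · intro k _ k' _ he
            exact u.symm.injective he
        rw [Nat.card_Icc] at ha
        by_cases hβvj1 : β ≤ v (j + 1)
        · split_ifs <;> omega
        · -- (c) : E_v(β-1) ≤ β - 2 (value v(j+1) missing)
          have hc : ((Finset.Icc 1 j).filter (fun r => v r ≤ β - 1)).card
              ≤ ((Finset.Icc 1 (β - 1)).erase (v (j + 1))).card := by
            apply Finset.card_le_card_of_injOn (fun r => v r)
            · intro r hr
              simp only [Finset.mem_coe, Finset.mem_filter, Finset.mem_Icc] at hr
              have hrn : v r ∈ Finset.Icc 1 n := hv.mem_Icc (by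
                simp only [Finset.mem_Icc]; omega)
              simp only [Finset.mem_Icc] at hrn
              simp only [Finset.mem_coe, Finset.mem_erase, Finset.mem_Icc]
              refine ⟨?_, hrn.1, hr.2⟩
              intro he
              have : r = j + 1 := v.injective he
              omega
            · intro r _ r' _ he
              exact v.injective he
          rw [Finset.card_erase_of_mem (by
            simp only [Finset.mem_Icc]; omega), Nat.card_Icc] at hc
          split_ifs <;> omega
      · -- u j < β : use E_u(i-2) ≤ E_u(β-1)
        have he' : ((Finset.Icc 1 j).filter (fun r => u r ≤ i - 2)).card
            ≤ ((Finset.Icc 1 j).filter (fun r => u r ≤ β - 1)).card := by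
          apply Finset.card_le_card
          intro r hr
          simp only [Finset.mem_filter, Finset.mem_Icc] at hr ⊢
          refine ⟨hr.1, ?_⟩
          -- claim : u r ≤ u j
          by_contra hcon
          have hur_gt : u j < u r := by
            by_contra hcon2
            omega
          have hlt : u.symm (u j) < u.symm (u r) :=
            MinReps.symm_mono hu hu' hi1 hi2 huj_ge1 hur_gt hr.2
          rw [Equiv.symm_apply_apply, Equiv.symm_apply_apply] at hlt
          omega
        split_ifs <;> omega
    split_ifs at hmU hmV star <;> omega
  -- conclude via dominance → Bruhat
  have husP : IsPermOn n (u * sAdj j) := by rw [hsadj]; exact hu.mul_swap hjIcc hj1Icc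
  have hvsP : IsPermOn n (v * sAdj j) := by rw [hsadj]; exact hv.mul_swap hjIcc hj1Icc
  exact dom_bruhat (v * sAdj j) hvsP _ (u * sAdj j) husP hdomS le_rfl
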